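/- The class of permutation graphs is closed under Seidel minors: if G is a permutation graph and H is a Seidel minor of G, then H is a permutation graph. -/

import Mathlib

universe u

/-- The Seidel complement of `G` at `v`: adjacency between the open neighborhood of `v`
and the set of vertices different from `v` and not adjacent to `v` is complemented,
all other adjacencies are unchanged. -/
def seidelCompl {V : Type u} (G : SimpleGraph V) (v : V) : SimpleGraph V where
  Adj x y := x ≠ y ∧
    Xor' (G.Adj x y)
      ((G.Adj v x ∧ ¬ G.Adj v y ∧ y ≠ v) ∨ (G.Adj v y ∧ ¬ G.Adj v x ∧ x ≠ v))
  symm := ⟨by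
    rintro x y ⟨hxy, h⟩
    refine ⟨hxy.symm, ?_⟩
    have h1 : G.Adj x y ↔ G.Adj y x := G.adj_comm x y
    unfold Xor' at h ⊢
    rw [← h1, or_comm]; exact h⟩
  loopless := ⟨fun x h => h.1 rfl⟩

/-- A permutation graph: there are two linear orders on the vertices such that two
distinct vertices are adjacent iff the two orders disagree on them. -/
def IsPermutationGraph {V : Type u} (G : SimpleGraph V) : Prop :=
  ∃ O₁ O₂ : LinearOrder V, ∀ u w : V, u ≠ w →
    (G.Adj u w ↔ ((O₁.lt u w ∧ O₂.lt w u) ∨ (O₁.lt w u ∧ O₂.lt u w)))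

/-- `SeidelMinor H G` : a graph isomorphic to `H` can be obtained from `G` by a finite
sequence of Seidel complementations and vertex deletions. -/
inductive SeidelMinor : ∀ {U V : Type u}, SimpleGraph U → SimpleGraph V → Prop
  | iso {U V : Type u} {H : SimpleGraph U} {G : SimpleGraph V} (e : H ≃g G) :
      SeidelMinor H G
  | seidel {U V : Type u} {H : SimpleGraph U} {G : SimpleGraph V} (v : V)
      (h : SeidelMinor H (seidelCompl G v)) : SeidelMinor H G
  | delete {U V : Type u} {H : SimpleGraph U} {G : SimpleGraph V} (v : V)
      (h : SeidelMinor H (G.induce {u : V | u ≠ v})) : SeidelMinor H G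

section AuxSeidel

variable {U V : Type u}

private lemma lo_trich (O : LinearOrder V) {x y : V} (h : x ≠ y) : O.lt x y ∨ O.lt y x := by
  letI := O
  exact h.lt_or_gt

private lemma lo_asymm (O : LinearOrder V) {x y : V} (h : O.lt x y) : ¬ O.lt y x := by
  letI := O
  exact lt_asymm h

private lemma lo_trans (O : LinearOrder V) {x y z : V} (h : O.lt x y) (h' : O.lt y z) :
    O.lt x z := by
  letI := O
  exact lt_trans h h'

/-- Pull back a linear order along an injective map. -/
private def pullOrder (O : LinearOrder V) (f : U → V) (hf : Function.Injective f) :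
    LinearOrder U :=
  letI := O
  LinearOrder.lift' f hf

private lemma pullOrder_lt (O : LinearOrder V) (f : U → V) (hf : Function.Injective f)
    (x y : U) : (pullOrder O f hf).lt x y ↔ O.lt (f x) (f y) := Iff.rfl

/-- Isomorphic graphs: permutation property transfers. -/
private lemma perm_iso {H : SimpleGraph U} {G : SimpleGraph V} (e : H ≃g G)
    (h : IsPermutationGraph G) : IsPermutationGraph H := by
  obtain ⟨O₁, O₂, hO⟩ := h
  refine ⟨pullOrder O₁ e e.injective, pullOrder O₂ e e.injective, fun u w hne => ?_⟩
  exact (e.map_rel_iff.symm).trans (hO (e u) (e w) (fun hc => hne (e.injective hc)))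

/-- Induced subgraphs of permutation graphs are permutation graphs. -/
private lemma perm_induce (G : SimpleGraph V) (s : Set V)
    (h : IsPermutationGraph G) : IsPermutationGraph (G.induce s) := by
  obtain ⟨O₁, O₂, hO⟩ := h
  refine ⟨pullOrder O₁ Subtype.val Subtype.val_injective,
    pullOrder O₂ Subtype.val Subtype.val_injective, fun u w hne => ?_⟩
  exact hO u.val w.val (fun hc => hne (Subtype.val_injective hc))

/-- Key for the "rotation about `v`" of a linear order. -/
private def rotKey (O : LinearOrder V) (v x : V) : ℕ :=
  if x = v then 1 else if O.lt v x then 0 else 2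

/-- The rotated order: vertices after `v` come first, then `v`, then vertices before `v`;
within each block the original order is kept. -/
private def rotOrder (O : LinearOrder V) (v : V) : LinearOrder V :=
  letI := O
  LinearOrder.lift' (fun x => toLex ((rotKey O v x, x) : ℕ × V))
    (fun a b h => by
      have := congrArg (fun p : ℕ ×ₗ V => (ofLex p).2) h
      simpa using this)

private lemma rotOrder_lt (O : LinearOrder V) (v x y : V) :
    (rotOrder O v).lt x y ↔
      (rotKey O v x < rotKey O v y ∨ (rotKey O v x = rotKey O v y ∧ O.lt x y)) := by
  letI := O
  show toLex ((rotKey O v x, x) : ℕ × V) < toLex ((rotKey O v y, y) : ℕ × V) ↔ _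
  rw [Prod.Lex.lt_iff]
  exact Iff.rfl

private lemma rotKey_self (O : LinearOrder V) (v : V) : rotKey O v v = 1 := by
  simp [rotKey]

private lemma rotKey_of_lt (O : LinearOrder V) {v x : V} (h : O.lt v x) :
    rotKey O v x = 0 := by
  have hx : x ≠ v := by
    rintro rfl
    exact lo_asymm O h h
  simp [rotKey, hx, h]

private lemma rotKey_of_gt (O : LinearOrder V) {v x : V} (h : O.lt x v) :
    rotKey O v x = 2 := by
  have hx : x ≠ v := by
    rintro rfl
    exact lo_asymm O h h
  have h' : ¬ O.lt v x := lo_asymm O h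
  simp [rotKey, hx, h']

set_option maxHeartbeats 800000 in
/-- Seidel complementation preserves being a permutation graph. -/
private lemma perm_seidelCompl (G : SimpleGraph V) (v : V)
    (h : IsPermutationGraph G) : IsPermutationGraph (seidelCompl G v) := by
  obtain ⟨O₁, O₂, hO⟩ := h
  refine ⟨rotOrder O₁ v, rotOrder O₂ v, fun u w hne => ?_⟩
  rw [rotOrder_lt, rotOrder_lt, rotOrder_lt, rotOrder_lt]
  have hAdj : (seidelCompl G v).Adj u w ↔ (u ≠ w ∧
      Xor' (G.Adj u w)
        ((G.Adj v u ∧ ¬ G.Adj v w ∧ w ≠ v) ∨ (G.Adj v w ∧ ¬ G.Adj v u ∧ u ≠ v))) := Iff.rfl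
  rw [hAdj]
  by_cases huv : u = v
  · subst huv
    have hvv : ¬ G.Adj u u := G.loopless.irrefl u
    rw [hO u w hne]
    rcases lo_trich O₁ hne with h1 | h1 <;> rcases lo_trich O₂ hne with h2 | h2 <;>
    · have a1 := lo_asymm O₁ h1
      have a2 := lo_asymm O₂ h2
      simp only [rotKey_self, rotKey_of_lt _ h1, rotKey_of_gt _ h1,
        rotKey_of_lt _ h2, rotKey_of_gt _ h2]
      simp only [Xor', Xor, ne_eq]
      simp_all only [Nat.reduceLT, Nat.reduceEqDiff, lt_self_iff_false, true_and, and_true,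
        false_and, and_false, or_false, false_or, true_or, or_true, not_false_eq_true,
        not_true_eq_false, iff_true, iff_false, true_iff, false_iff, not_or, and_self,
        or_self, ne_eq, not_and]
      try tauto
  · by_cases hwv : w = v
    · subst hwv
      have hvv : ¬ G.Adj w w := G.loopless.irrefl w
      have hne' : w ≠ u := fun hc => hne hc.symm
      rw [hO u w hne]
      rcases lo_trich O₁ hne' with h1 | h1 <;> rcases lo_trich O₂ hne' with h2 | h2 <;>
      · have a1 := lo_asymm O₁ h1
        have a2 := lo_asymm O₂ h2
        simp only [rotKey_self, rotKey_of_lt _ h1, rotKey_of_gt _ h1,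
          rotKey_of_lt _ h2, rotKey_of_gt _ h2]
        simp only [Xor', Xor, ne_eq]
        simp_all only [Nat.reduceLT, Nat.reduceEqDiff, lt_self_iff_false, true_and, and_true,
          false_and, and_false, or_false, false_or, true_or, or_true, not_false_eq_true,
          not_true_eq_false, iff_true, iff_false, true_iff, false_iff, not_or, and_self,
          or_self, ne_eq, not_and]
        try tauto
    · have hvu : v ≠ u := fun hc => huv hc.symm
      have hvw : v ≠ w := fun hc => hwv hc.symm
      rw [hO u w hne, hO v u hvu, hO v w hvw]
      clear hAdj hO
      clear G
      have t1 := lo_trich O₁ hne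
      have t2 := lo_trich O₂ hne
      have a1 := lo_asymm O₁ (x := u) (y := w)
      have a1' := lo_asymm O₁ (x := w) (y := u)
      have a2 := lo_asymm O₂ (x := u) (y := w)
      have a2' := lo_asymm O₂ (x := w) (y := u)
      rcases lo_trich O₁ hvu with h1u | h1u <;> rcases lo_trich O₁ hvw with h1w | h1w <;>
        rcases lo_trich O₂ hvu with h2u | h2u <;> rcases lo_trich O₂ hvw with h2w | h2w <;>
      · have n1u := lo_asymm O₁ h1u
        have n1w := lo_asymm O₁ h1w
        have n2u := lo_asymm O₂ h2u
        have n2w := lo_asymm O₂ h2w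
        try (have hf1 := lo_trans O₁ h1w h1u; have nf1 := lo_asymm O₁ hf1)
        try (have hf1 := lo_trans O₁ h1u h1w; have nf1 := lo_asymm O₁ hf1)
        try (have hf2 := lo_trans O₂ h2w h2u; have nf2 := lo_asymm O₂ hf2)
        try (have hf2 := lo_trans O₂ h2u h2w; have nf2 := lo_asymm O₂ hf2)
        simp only [rotKey_of_lt _ h1u, rotKey_of_gt _ h1u, rotKey_of_lt _ h1w,
          rotKey_of_gt _ h1w, rotKey_of_lt _ h2u, rotKey_of_gt _ h2u,
          rotKey_of_lt _ h2w, rotKey_of_gt _ h2w]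
        simp only [Xor', Xor, ne_eq]
        simp_all only [Nat.reduceLT, Nat.reduceEqDiff, lt_self_iff_false, true_and, and_true,
          false_and, and_false, or_false, false_or, true_or, or_true, not_false_eq_true,
          not_true_eq_false, iff_true, iff_false, true_iff, false_iff, not_or, and_self,
          or_self, ne_eq, not_and]
        try tauto

private lemma perm_of_seidelMinor_aux : ∀ {U V : Type u} {H : SimpleGraph U}
    {G : SimpleGraph V}, SeidelMinor H G → IsPermutationGraph G → IsPermutationGraph H := by
  intro U V H G hHG
  induction hHG with
  | iso e => exact fun hG => perm_iso e hG
  | seidel v h ih => exact fun hG => ih (perm_seidelCompl _ v hG)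
  | delete v h ih => exact fun hG => ih (perm_induce _ _ hG)

end AuxSeidel

/-- Permutation graphs are closed under Seidel minors. -/
theorem isPermutationGraph_of_seidelMinor {W V : Type u} [Fintype W] [Fintype V]
    (G : SimpleGraph V) (H : SimpleGraph W)
    (hG : IsPermutationGraph G) (hHG : SeidelMinor H G) : IsPermutationGraph H := by
  exact perm_of_seidelMinor_aux hHG hG
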